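/- If f, g : {0,1}^n → {0,1}, S ⊆ {1,…,n}, F_S(x) = f(x) ∧ (g(x) ⊕ ⊕_{i∈S} x_i), and φ(x) = f(x)g(x) - (1/2)f(x), then for all S, T ⊆ {1,…,n}: |F̂_S(T) - (1/2)f̂(T)| = |φ̂(S ⊕ T)|, where S ⊕ T is the symmetric difference. -/
import Mathlib


/-- Fourier coefficient of `h : {0,1}^n → ℝ` at `T`. -/
noncomputable def bFourier {n : ℕ} (h : (Fin n → Bool) → ℝ) (T : Finset (Fin n)) : ℝ :=
  (∑ x : Fin n → Bool, h x * (-1 : ℝ) ^ (T.filter fun i => x i).card) / 2 ^ n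

/-- `{0,1}`-valued function as a real function. -/
def b2r {n : ℕ} (h : (Fin n → Bool) → Bool) : (Fin n → Bool) → ℝ :=
  fun x => if h x then 1 else 0

private lemma neg_one_pow_bodd (m : ℕ) : (-1 : ℝ) ^ m = if m.bodd then -1 else 1 := by
  induction m with
  | zero => simp
  | succ k ih => rw [pow_succ, ih, Nat.bodd_succ]; cases Nat.bodd k <;> simp

private lemma sign_symmDiff {ι : Type*} [DecidableEq ι] (A B : Finset ι) :
    (-1 : ℝ) ^ (symmDiff A B).card = (-1) ^ A.card * (-1) ^ B.card := by
  have hcard : (symmDiff A B).card + 2 * (A ∩ B).card = A.card + B.card := by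
    have hAB : A.card = (A \ B).card + (A ∩ B).card := by
      rw [Finset.card_sdiff_add_card_inter]
    have hBA : B.card = (B \ A).card + (B ∩ A).card := by
      rw [Finset.card_sdiff_add_card_inter]
    have hd : (symmDiff A B).card = (A \ B).card + (B \ A).card := by
      rw [symmDiff_def, Finset.sup_eq_union, Finset.card_union_of_disjoint]
      exact disjoint_sdiff_sdiff
    rw [Finset.inter_comm] at hBA
    omega
  have := congrArg (fun m => (-1 : ℝ) ^ m) hcard
  simpa [pow_add, pow_mul] using this

theorem stmt7 {n : ℕ} (f g : (Fin n → Bool) → Bool) (S T : Finset (Fin n)) :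
    |bFourier (b2r fun x => f x && (g x != (S.filter fun i => x i).card.bodd)) T
        - (1 / 2) * bFourier (b2r f) T| =
      |bFourier (fun x => b2r f x * b2r g x - (1 / 2) * b2r f x) (symmDiff S T)| := by
  congr 1
  unfold bFourier
  rw [← mul_div_assoc, ← sub_div]
  congr 1
  rw [Finset.mul_sum, ← Finset.sum_sub_distrib]
  apply Finset.sum_congr rfl
  intro x _
  have key : b2r (fun x => f x && (g x != (S.filter fun i => x i).card.bodd)) x
      = (1 / 2) * b2r f x
        + (-1 : ℝ) ^ ((S.filter fun i => x i).card)
          * (b2r f x * b2r g x - (1 / 2) * b2r f x) := by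
    cases hs : (S.filter fun i => x i).card.bodd <;> cases hf : f x <;> cases hg : g x <;>
      simp [b2r, neg_one_pow_bodd, hs, hf, hg] <;> norm_num
  rw [key]
  have hfilt : ((symmDiff S T).filter fun i => x i) =
      symmDiff (S.filter fun i => x i) (T.filter fun i => x i) := by
    ext i
    simp only [Finset.mem_symmDiff, Finset.mem_filter]
    by_cases h : x i = true <;> simp [h]
  rw [hfilt, sign_symmDiff]
  ring
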